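/- Let G be a group with finite generating set S, let v(n) = |B(n)| be the cardinality of the ball of radius n in the word metric, and let F ⊆ G be a finite nonempty subset. If n is such that v(n) ≥ 2|F|, then there exists s ∈ S with |F △ F·s| ≥ |F|/n. -/

import Mathlib

open scoped symmDiff

/-- The ball of radius `n` in a group `G` with respect to a generating set `S`:
elements expressible as products of at most `n` elements of `S ∪ S⁻¹`. -/
def wordBall {G : Type*} [Group G] (S : Finset G) (n : ℕ) : Set G :=
  {g | ∃ l : List G, l.length ≤ n ∧ (∀ x ∈ l, x ∈ S ∨ x⁻¹ ∈ S) ∧ l.prod = g}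

private lemma csc_image_mul {G : Type*} [Group G] [DecidableEq G]
    (F A : Finset G) (u : G) :
    (symmDiff (F.image fun f => f * u) (A.image fun f => f * u)).card
      = (symmDiff F A).card := by
  rw [← Finset.image_symmDiff F A (mul_left_injective u)]
  exact Finset.card_image_of_injective _ (mul_left_injective u)

private lemma csc_triangle {G : Type*} [Group G] [DecidableEq G] (F : Finset G) (x p : G) :
    (symmDiff F (F.image fun f => f * (x * p))).card ≤
      (symmDiff F (F.image fun f => f * p)).card +
      (symmDiff F (F.image fun f => f * x)).card := by
  have h1 : (F.image fun f => f * (x * p))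
      = ((F.image fun f => f * x).image fun f => f * p) := by
    rw [Finset.image_image]; simp [Function.comp, mul_assoc]
  have h2 : (symmDiff (F.image fun f => f * p)
      ((F.image fun f => f * x).image fun f => f * p)).card
      = (symmDiff F (F.image fun f => f * x)).card :=
    csc_image_mul F (F.image fun f => f * x) p
  calc (symmDiff F (F.image fun f => f * (x * p))).card
      ≤ ((symmDiff F (F.image fun f => f * p)) ∪
          (symmDiff (F.image fun f => f * p)
            ((F.image fun f => f * x).image fun f => f * p))).card := by
        apply Finset.card_le_card
        rw [h1]
        exact symmDiff_triangle F (F.image fun f => f * p)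
          ((F.image fun f => f * x).image fun f => f * p)
    _ ≤ _ := by rw [← h2] at *; exact (Finset.card_union_le _ _)

theorem coulhon_saloff_coste {G : Type*} [Group G] [DecidableEq G]
    (S : Finset G) (hgen : Subgroup.closure (S : Set G) = ⊤)
    (F : Finset G) (hF : F.Nonempty) (n : ℕ) (hn : 0 < n)
    (hv : 2 * F.card ≤ Nat.card (wordBall S n)) :
    ∃ s ∈ S, (F.card : ℝ) / n ≤ ((symmDiff F (F.image fun f => f * s)).card : ℝ) := by
  classical
  set D : G → ℕ := fun g => (symmDiff F (F.image fun f => f * g)).card with hD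
  set M : ℕ := S.sup D with hM
  have hFc : 0 < F.card := Finset.card_pos.2 hF
  -- D is invariant under inversion
  have hDinv : ∀ x : G, D x⁻¹ = D x := by
    intro x
    have h := csc_image_mul F (F.image fun f => f * x⁻¹) x
    have h2 : ((F.image fun f => f * x⁻¹).image fun f => f * x) = F := by
      rw [Finset.image_image]; simp [Function.comp]
    rw [h2] at h
    simp only [hD]
    rw [← h, symmDiff_comm]
  have hDS : ∀ x : G, (x ∈ S ∨ x⁻¹ ∈ S) → D x ≤ M := by
    rintro x (hx | hx)
    · exact Finset.le_sup hx
    · calc D x = D x⁻¹ := (hDinv x).symm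
        _ ≤ M := Finset.le_sup hx
  have hlist : ∀ l : List G, (∀ x ∈ l, x ∈ S ∨ x⁻¹ ∈ S) → D l.prod ≤ l.length * M := by
    intro l
    induction l with
    | nil =>
      intro _
      simp only [List.prod_nil, List.length_nil, Nat.zero_mul, Nat.le_zero, hD]
      simp
    | cons x t ih =>
      intro h
      have hx := h x List.mem_cons_self
      have ht := ih fun y hy => h y (List.mem_cons_of_mem x hy)
      have := csc_triangle F x t.prod
      simp only [List.prod_cons, List.length_cons]
      calc D (x * t.prod) ≤ D t.prod + D x := this
        _ ≤ t.length * M + M := Nat.add_le_add ht (hDS x hx)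
        _ = (t.length + 1) * M := by ring
  -- finiteness of the ball
  have hpos : 0 < Nat.card (wordBall S n) := lt_of_lt_of_le (by positivity) hv
  have hfin' : Finite (wordBall S n) := Nat.finite_of_card_ne_zero hpos.ne'
  have hfin : (wordBall S n).Finite := Set.toFinite _
  set Bf : Finset G := hfin.toFinset with hBf
  have hBcard : Nat.card (wordBall S n) = Bf.card := by
    rw [Nat.card_coe_set_eq, Set.ncard_eq_toFinset_card _ hfin]
  have hBmem : ∀ g, g ∈ Bf ↔ g ∈ wordBall S n := fun g => hfin.mem_toFinset
  -- intersection as filter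
  have hIF : ∀ g : G, F ∩ (F.image fun f => f * g) = F.filter fun f => f * g⁻¹ ∈ F := by
    intro g
    ext f
    simp only [Finset.mem_inter, Finset.mem_image, Finset.mem_filter]
    constructor
    · rintro ⟨hf, a, ha, rfl⟩; simpa using ⟨hf, ha⟩
    · rintro ⟨hf, h⟩; exact ⟨hf, f * g⁻¹, h, by simp⟩
  -- counting
  have hcount : ∑ g ∈ Bf, (F.filter fun f => f * g⁻¹ ∈ F).card ≤ F.card * F.card := by
    rw [← Finset.card_sigma]
    have : F.card * F.card = (F ×ˢ F).card := (Finset.card_product F F).symm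
    rw [this]
    apply Finset.card_le_card_of_injOn (fun p => (p.2 * p.1⁻¹, p.2))
    · rintro ⟨g, f⟩ hp
      simp only [Finset.mem_coe, Finset.mem_sigma, Finset.mem_filter] at hp
      simp only [Finset.mem_coe, Finset.mem_product]
      exact ⟨hp.2.2, hp.2.1⟩
    · rintro ⟨g, f⟩ _ ⟨g', f'⟩ _ h
      simp only [Prod.mk.injEq] at h
      obtain ⟨h1, rfl⟩ := h
      have : g = g' := by
        have := mul_left_cancel h1
        exact inv_injective this
      simp [this]
  -- pick minimizer
  have hBne : Bf.Nonempty := by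
    rw [← Finset.card_pos, ← hBcard]; exact hpos
  obtain ⟨g₀, hg₀B, hg₀min⟩ :=
    Finset.exists_min_image Bf (fun g => (F.filter fun f => f * g⁻¹ ∈ F).card) hBne
  set I : ℕ := (F.filter fun f => f * g₀⁻¹ ∈ F).card with hI
  have hsum : Bf.card * I ≤ F.card * F.card := by
    calc Bf.card * I = Bf.card • I := rfl
      _ ≤ ∑ g ∈ Bf, (F.filter fun f => f * g⁻¹ ∈ F).card :=
          Finset.card_nsmul_le_sum Bf _ I fun g hg => hg₀min g hg
      _ ≤ _ := hcount
  have h2I : 2 * I ≤ F.card := by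
    have h1 : F.card * (2 * I) ≤ F.card * F.card := by
      calc F.card * (2 * I) = (2 * F.card) * I := by ring
        _ ≤ Bf.card * I := Nat.mul_le_mul_right I (hBcard ▸ hv)
        _ ≤ F.card * F.card := hsum
    exact Nat.le_of_mul_le_mul_left h1 hFc
  -- |F ∆ Fg₀| ≥ |F|
  have hcardsd : F.card ≤ D g₀ := by
    have hA := Finset.card_sdiff_add_card_inter F (F.image fun f => f * g₀)
    have hB := Finset.card_sdiff_add_card_inter (F.image fun f => f * g₀) F
    have himg : (F.image fun f => f * g₀).card = F.card :=
      Finset.card_image_of_injective _ (mul_left_injective g₀)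
    have hinter : ((F.image fun f => f * g₀) ∩ F).card = I := by
      rw [Finset.inter_comm, hIF g₀]
    have hI' : (F ∩ (F.image fun f => f * g₀)).card = I := by rw [hIF g₀]
    have hDsplit : D g₀ = (F \ (F.image fun f => f * g₀)).card
        + ((F.image fun f => f * g₀) \ F).card := by
      simp only [hD, symmDiff_def, Finset.sup_eq_union]
      exact Finset.card_union_of_disjoint disjoint_sdiff_sdiff
    omega
  -- g₀ in the ball gives the bound
  obtain ⟨l, hlen, hmem, hprod⟩ := (hBmem g₀).1 hg₀B
  have hDg₀ : D g₀ ≤ n * M := by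
    calc D g₀ = D l.prod := by rw [hprod]
      _ ≤ l.length * M := hlist l hmem
      _ ≤ n * M := Nat.mul_le_mul_right M hlen
  have hFM : F.card ≤ n * M := le_trans hcardsd hDg₀
  have hSne : S.Nonempty := by
    rcases S.eq_empty_or_nonempty with h | h
    · exfalso
      rw [hM, h, Finset.sup_empty] at hFM
      rw [Nat.bot_eq_zero, Nat.mul_zero] at hFM
      omega
    · exact h
  obtain ⟨s, hs, hsup⟩ := Finset.exists_mem_eq_sup S hSne D
  have hsup' : M = D s := by rw [hM, hsup]
  refine ⟨s, hs, ?_⟩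
  rw [div_le_iff₀ (by exact_mod_cast hn)]
  have : F.card ≤ D s * n := by rw [mul_comm]; rw [hsup'] at hFM; exact hFM
  exact_mod_cast this
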